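/- arXiv:0706.0332 — 5 statements merged into one kernel-verified Lean document; each statement's English description precedes it below -/
import Mathlib

section
/- (Null-vector condition for the scalar-modified tensor.) Let R be an algebraic curvature tensor on ℝⁿ, let f ≥ 0 be a real number, and set R̃ := R − f·I. Assume R̃ has nonnegative complex sectional curvature, and suppose Z, W ∈ ℂⁿ satisfy R̃(Z, W, Z̄, W̄) = 0. Then Q(R)(Z, W, Z̄, W̄) is a real number and Q(R)(Z, W, Z̄, W̄) ≥ 0. -/
open Complex

noncomputable section

/-- An algebraic curvature tensor on `ℝⁿ`, given by its coefficients on the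
standard basis, satisfying the usual symmetries and the first Bianchi identity.
(A multilinear map `(ℝⁿ)⁴ → ℝ` with these symmetries is equivalent to such data.) -/
structure AlgCurv (n : ℕ) where
  R : Fin n → Fin n → Fin n → Fin n → ℝ
  skew₁ : ∀ i j k l, R i j k l = - R j i k l
  skew₂ : ∀ i j k l, R i j k l = - R i j l k
  pair_symm : ∀ i j k l, R i j k l = R k l i j
  bianchi : ∀ i j k l, R i j k l + R j k i l + R k i j l = 0

namespace AlgCurv

variable {n : ℕ}

/-- The multilinear map `(ℝⁿ)⁴ → ℝ` determined by the coefficients. -/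
def evalR (T : AlgCurv n) (X Y U V : Fin n → ℝ) : ℝ :=
  ∑ i : Fin n, ∑ j : Fin n, ∑ k : Fin n, ∑ l : Fin n,
    T.R i j k l * X i * Y j * U k * V l

/-- The `ℂ`-multilinear extension to `ℂⁿ = Fin n → ℂ`. -/
def evalC (T : AlgCurv n) (Z W U V : Fin n → ℂ) : ℂ :=
  ∑ i : Fin n, ∑ j : Fin n, ∑ k : Fin n, ∑ l : Fin n,
    (T.R i j k l : ℂ) * Z i * W j * U k * V l

end AlgCurv

/-- The standard (real) inner product on `ℝⁿ`. -/
def rInner {n : ℕ} (X Y : Fin n → ℝ) : ℝ := ∑ i : Fin n, X i * Y i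

/-- The `ℂ`-bilinear (not hermitian) extension `⟨Z,W⟩ = Σᵢ Zᵢ Wᵢ`. -/
def cInner {n : ℕ} (Z W : Fin n → ℂ) : ℂ := ∑ i : Fin n, Z i * W i

/-- Entrywise complex conjugation. -/
def conjV {n : ℕ} (Z : Fin n → ℂ) : Fin n → ℂ := fun i => starRingEnd ℂ (Z i)

/-- `R` has nonnegative complex sectional curvature: `R(Z,W,Z̄,W̄)` is a
nonnegative real number for all `Z, W ∈ ℂⁿ`. -/
def nonnegCSC {n : ℕ} (T : AlgCurv n) : Prop :=
  ∀ Z W : Fin n → ℂ, ∃ r : ℝ, 0 ≤ r ∧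
    T.evalC Z W (conjV Z) (conjV W) = (r : ℂ)

/-- The complexified vector `X + iY`. -/
def cx {n : ℕ} (X Y : Fin n → ℝ) : Fin n → ℂ :=
  fun i => (X i : ℂ) + Complex.I * (Y i : ℂ)

/-- The `ℂ`-multilinear extension of the curvature tensor of constant curvature one,
`I(X,Y,Z,W) = ⟨X,Z⟩⟨Y,W⟩ − ⟨X,W⟩⟨Y,Z⟩`. -/
def IC {n : ℕ} (Z W U V : Fin n → ℂ) : ℂ :=
  cInner Z U * cInner W V - cInner Z V * cInner W U

/-- The `p`-th standard basis vector of `ℂⁿ`. -/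
def basisC {n : ℕ} (p : Fin n) : Fin n → ℂ := fun i => if i = p then 1 else 0

/-- Hamilton's reaction term `Q(R)`, evaluated on `(Z, W, U, V)`
(with `U = Z̄`, `V = W̄` in applications). -/
def Qr {n : ℕ} (T : AlgCurv n) (Z W U V : Fin n → ℂ) : ℂ :=
  (∑ p : Fin n, ∑ q : Fin n,
      T.evalC Z W (basisC p) (basisC q) * T.evalC U V (basisC p) (basisC q))
  + 2 * (∑ p : Fin n, ∑ q : Fin n,
      T.evalC Z (basisC p) U (basisC q) * T.evalC W (basisC p) V (basisC q))
  - 2 * (∑ p : Fin n, ∑ q : Fin n,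
      T.evalC Z (basisC p) V (basisC q) * T.evalC W (basisC p) U (basisC q))

/-- The `ℂ`-linear extension of a real matrix (endomorphism of `ℝⁿ`) acting on `ℂⁿ`. -/
def mulVecC {n : ℕ} (A : Matrix (Fin n) (Fin n) ℝ) (Z : Fin n → ℂ) : Fin n → ℂ :=
  fun i => ∑ j : Fin n, (A i j : ℂ) * Z j

/-- `(A ∧ id)(Z, W, Z̄, W̄)`. -/
def wedgeId {n : ℕ} (A : Matrix (Fin n) (Fin n) ℝ) (Z W : Fin n → ℂ) : ℂ :=
  (1/2 : ℂ) * (cInner (mulVecC A Z) (conjV Z) * cInner W (conjV W)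
             + cInner (mulVecC A W) (conjV W) * cInner Z (conjV Z))
  - (1/2 : ℂ) * (cInner (mulVecC A W) (conjV Z) * cInner Z (conjV W)
               + cInner (mulVecC A Z) (conjV W) * cInner W (conjV Z))

/-- The Ricci curvature of `R`, as a matrix:  `⟨Ric(R)(X), Y⟩ = Σ_p R(X, e_p, Y, e_p)`. -/
def ricM {n : ℕ} (T : AlgCurv n) : Matrix (Fin n) (Fin n) ℝ :=
  Matrix.of fun i j => ∑ p : Fin n, T.R i p j p


namespace AlgCurv
variable {n : ℕ} (T : AlgCurv n)

lemma conjV_conjV (X : Fin n → ℂ) : conjV (conjV X) = X := by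
  funext i; simp [conjV]

lemma conjV_basisC (p : Fin n) : conjV (basisC p) = basisC p := by
  funext i; by_cases h : i = p <;> simp [conjV, basisC, h]

lemma conjV_lin (X Y : Fin n → ℂ) (c : ℂ) :
    conjV (fun i => X i + c * Y i) = fun i => conjV X i + (starRingEnd ℂ c) * conjV Y i := by
  funext i; simp [conjV]

lemma evalC_conj (X Y U V : Fin n → ℂ) :
    T.evalC (conjV X) (conjV Y) (conjV U) (conjV V) = starRingEnd ℂ (T.evalC X Y U V) := by
  simp only [AlgCurv.evalC, map_sum, map_mul, Complex.conj_ofReal, conjV]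

lemma evalC_skew1 (X Y U V : Fin n → ℂ) : T.evalC Y X U V = - T.evalC X Y U V := by
  simp only [AlgCurv.evalC]
  rw [Finset.sum_comm]
  simp only [← Finset.sum_neg_distrib]
  refine Finset.sum_congr rfl fun i _ => Finset.sum_congr rfl fun j _ =>
    Finset.sum_congr rfl fun k _ => Finset.sum_congr rfl fun l _ => ?_
  rw [T.skew₁ j i k l]
  push_cast
  ring

lemma evalC_skew2 (X Y U V : Fin n → ℂ) : T.evalC X Y V U = - T.evalC X Y U V := by
  simp only [AlgCurv.evalC]
  simp only [← Finset.sum_neg_distrib]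
  refine Finset.sum_congr rfl fun i _ => Finset.sum_congr rfl fun j _ => ?_
  rw [Finset.sum_comm]
  refine Finset.sum_congr rfl fun k _ => Finset.sum_congr rfl fun l _ => ?_
  rw [T.skew₂ i j l k]
  push_cast
  ring

lemma sum4_comm (f : Fin n → Fin n → Fin n → Fin n → ℂ) :
    ∑ i : Fin n, ∑ j : Fin n, ∑ k : Fin n, ∑ l : Fin n, f i j k l
      = ∑ k : Fin n, ∑ l : Fin n, ∑ i : Fin n, ∑ j : Fin n, f i j k l := by
  calc ∑ i : Fin n, ∑ j : Fin n, ∑ k : Fin n, ∑ l : Fin n, f i j k l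
      = ∑ i : Fin n, ∑ k : Fin n, ∑ j : Fin n, ∑ l : Fin n, f i j k l :=
        Finset.sum_congr rfl fun i _ => Finset.sum_comm
    _ = ∑ k : Fin n, ∑ i : Fin n, ∑ j : Fin n, ∑ l : Fin n, f i j k l := Finset.sum_comm
    _ = ∑ k : Fin n, ∑ i : Fin n, ∑ l : Fin n, ∑ j : Fin n, f i j k l :=
        Finset.sum_congr rfl fun k _ => Finset.sum_congr rfl fun i _ => Finset.sum_comm
    _ = ∑ k : Fin n, ∑ l : Fin n, ∑ i : Fin n, ∑ j : Fin n, f i j k l :=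
        Finset.sum_congr rfl fun k _ => Finset.sum_comm

lemma evalC_pair (X Y U V : Fin n → ℂ) : T.evalC U V X Y = T.evalC X Y U V := by
  simp only [AlgCurv.evalC]
  rw [sum4_comm]
  refine Finset.sum_congr rfl fun i _ => Finset.sum_congr rfl fun j _ =>
    Finset.sum_congr rfl fun k _ => Finset.sum_congr rfl fun l _ => ?_
  rw [T.pair_symm k l i j]
  ring

lemma evalC_lin1 (X X' Y U V : Fin n → ℂ) (c : ℂ) :
    T.evalC (fun i => X i + c * X' i) Y U V = T.evalC X Y U V + c * T.evalC X' Y U V := by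
  have h : ∀ i j k l, ((T.R i j k l : ℂ)) * (X i + c * X' i) * Y j * U k * V l
      = (T.R i j k l : ℂ) * X i * Y j * U k * V l
        + c * ((T.R i j k l : ℂ) * X' i * Y j * U k * V l) := by intros; ring
  simp only [AlgCurv.evalC, h, Finset.sum_add_distrib, Finset.mul_sum]

lemma evalC_lin2 (X Y Y' U V : Fin n → ℂ) (c : ℂ) :
    T.evalC X (fun i => Y i + c * Y' i) U V = T.evalC X Y U V + c * T.evalC X Y' U V := by
  have h : ∀ i j k l, ((T.R i j k l : ℂ)) * X i * (Y j + c * Y' j) * U k * V l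
      = (T.R i j k l : ℂ) * X i * Y j * U k * V l
        + c * ((T.R i j k l : ℂ) * X i * Y' j * U k * V l) := by intros; ring
  simp only [AlgCurv.evalC, h, Finset.sum_add_distrib, Finset.mul_sum]

lemma evalC_lin3 (X Y U U' V : Fin n → ℂ) (c : ℂ) :
    T.evalC X Y (fun i => U i + c * U' i) V = T.evalC X Y U V + c * T.evalC X Y U' V := by
  have h : ∀ i j k l, ((T.R i j k l : ℂ)) * X i * Y j * (U k + c * U' k) * V l
      = (T.R i j k l : ℂ) * X i * Y j * U k * V l
        + c * ((T.R i j k l : ℂ) * X i * Y j * U' k * V l) := by intros; ring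
  simp only [AlgCurv.evalC, h, Finset.sum_add_distrib, Finset.mul_sum]

lemma evalC_lin4 (X Y U V V' : Fin n → ℂ) (c : ℂ) :
    T.evalC X Y U (fun i => V i + c * V' i) = T.evalC X Y U V + c * T.evalC X Y U V' := by
  have h : ∀ i j k l, ((T.R i j k l : ℂ)) * X i * Y j * U k * (V l + c * V' l)
      = (T.R i j k l : ℂ) * X i * Y j * U k * V l
        + c * ((T.R i j k l : ℂ) * X i * Y j * U k * V' l) := by intros; ring
  simp only [AlgCurv.evalC, h, Finset.sum_add_distrib, Finset.mul_sum]

end AlgCurv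

lemma cInner_lin1 {n : ℕ} (X X' Y : Fin n → ℂ) (c : ℂ) :
    cInner (fun i => X i + c * X' i) Y = cInner X Y + c * cInner X' Y := by
  have h : ∀ i, (X i + c * X' i) * Y i = X i * Y i + c * (X' i * Y i) := by intros; ring
  simp only [cInner, h, Finset.sum_add_distrib, Finset.mul_sum]

lemma cInner_lin2 {n : ℕ} (X Y Y' : Fin n → ℂ) (c : ℂ) :
    cInner X (fun i => Y i + c * Y' i) = cInner X Y + c * cInner X Y' := by
  have h : ∀ i, X i * (Y i + c * Y' i) = X i * Y i + c * (X i * Y' i) := by intros; ring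
  simp only [cInner, h, Finset.sum_add_distrib, Finset.mul_sum]

lemma cInner_conj {n : ℕ} (X Y : Fin n → ℂ) :
    cInner (conjV X) (conjV Y) = starRingEnd ℂ (cInner X Y) := by
  simp only [cInner, map_sum, map_mul, conjV]

lemma IC_conj {n : ℕ} (X Y U V : Fin n → ℂ) :
    IC (conjV X) (conjV Y) (conjV U) (conjV V) = starRingEnd ℂ (IC X Y U V) := by
  simp only [IC, cInner_conj, map_sub, map_mul]

namespace AlgCurv
variable {n : ℕ} (T : AlgCurv n)

lemma evalC_basis (X U : Fin n → ℂ) (j i : Fin n) :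
    T.evalC X (basisC j) U (basisC i)
      = ∑ p : Fin n, ∑ r : Fin n, (T.R p j r i : ℂ) * X p * U r := by
  simp only [AlgCurv.evalC, basisC]
  refine Finset.sum_congr rfl fun p _ => ?_
  rw [Finset.sum_eq_single j ?_ ?_]
  · simp only [if_pos rfl, mul_one]
    refine Finset.sum_congr rfl fun r _ => ?_
    rw [Finset.sum_eq_single i ?_ ?_]
    · simp
    · intro l _ hl; simp [hl]
    · intro h; exact absurd (Finset.mem_univ i) h
  · intro q _ hq
    simp only [if_neg hq]
    simp
  · intro h; exact absurd (Finset.mem_univ j) h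

lemma sum3_perm_a (f : Fin n → Fin n → Fin n → ℂ) :
    ∑ r : Fin n, ∑ i : Fin n, ∑ j : Fin n, f r i j
      = ∑ j : Fin n, ∑ r : Fin n, ∑ i : Fin n, f r i j := by
  calc ∑ r : Fin n, ∑ i : Fin n, ∑ j : Fin n, f r i j
      = ∑ r : Fin n, ∑ j : Fin n, ∑ i : Fin n, f r i j :=
        Finset.sum_congr rfl fun r _ => Finset.sum_comm
    _ = ∑ j : Fin n, ∑ r : Fin n, ∑ i : Fin n, f r i j := Finset.sum_comm

lemma evalC_basis_expand1 (X U c d : Fin n → ℂ) :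
    (∑ i : Fin n, ∑ j : Fin n,
        starRingEnd ℂ (c i) * T.evalC X (basisC j) U (basisC i) * d j)
      = T.evalC X d U (conjV c) := by
  simp only [evalC_basis, Finset.mul_sum, Finset.sum_mul]
  rw [sum4_comm]
  conv_rhs => rw [AlgCurv.evalC]
  refine Finset.sum_congr rfl fun p _ => ?_
  rw [sum3_perm_a]
  refine Finset.sum_congr rfl fun j _ => Finset.sum_congr rfl fun r _ =>
    Finset.sum_congr rfl fun i _ => ?_
  simp only [conjV]
  ring

lemma evalC_basis_expand2 (X U c d : Fin n → ℂ) :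
    (∑ i : Fin n, ∑ j : Fin n,
        starRingEnd ℂ (c i) * T.evalC X (basisC i) U (basisC j) * d j)
      = T.evalC X (conjV c) U d := by
  simp only [evalC_basis, Finset.mul_sum, Finset.sum_mul]
  rw [sum4_comm]
  conv_rhs => rw [AlgCurv.evalC]
  refine Finset.sum_congr rfl fun p _ => ?_
  rw [Finset.sum_comm]
  refine Finset.sum_congr rfl fun i _ => Finset.sum_congr rfl fun r _ =>
    Finset.sum_congr rfl fun j _ => ?_
  simp only [conjV]
  ring

end AlgCurv

section Variation
variable {n : ℕ} (T : AlgCurv n) (f : ℝ) (Z W a b : Fin n → ℂ)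

/-- 16-term (grouped into 9) expansion of the perturbed modified curvature. -/
lemma Sv_expand (c : ℂ) :
    T.evalC (fun i => Z i + c * a i) (fun i => W i + c * b i)
        (conjV (fun i => Z i + c * a i)) (conjV (fun i => W i + c * b i))
      - (f : ℂ) * IC (fun i => Z i + c * a i) (fun i => W i + c * b i)
        (conjV (fun i => Z i + c * a i)) (conjV (fun i => W i + c * b i))
    = (T.evalC Z W (conjV Z) (conjV W) - (f:ℂ) * IC Z W (conjV Z) (conjV W))
      + c * ((T.evalC a W (conjV Z) (conjV W) - (f:ℂ) * IC a W (conjV Z) (conjV W))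
           + (T.evalC Z b (conjV Z) (conjV W) - (f:ℂ) * IC Z b (conjV Z) (conjV W)))
      + (starRingEnd ℂ c) *
          ((T.evalC Z W (conjV a) (conjV W) - (f:ℂ) * IC Z W (conjV a) (conjV W))
         + (T.evalC Z W (conjV Z) (conjV b) - (f:ℂ) * IC Z W (conjV Z) (conjV b)))
      + c^2 * (T.evalC a b (conjV Z) (conjV W) - (f:ℂ) * IC a b (conjV Z) (conjV W))
      + (starRingEnd ℂ c)^2 *
          (T.evalC Z W (conjV a) (conjV b) - (f:ℂ) * IC Z W (conjV a) (conjV b))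
      + c * (starRingEnd ℂ c) *
          ((T.evalC a W (conjV a) (conjV W) - (f:ℂ) * IC a W (conjV a) (conjV W))
         + (T.evalC a W (conjV Z) (conjV b) - (f:ℂ) * IC a W (conjV Z) (conjV b))
         + (T.evalC Z b (conjV a) (conjV W) - (f:ℂ) * IC Z b (conjV a) (conjV W))
         + (T.evalC Z b (conjV Z) (conjV b) - (f:ℂ) * IC Z b (conjV Z) (conjV b)))
      + c^2 * (starRingEnd ℂ c) *
          ((T.evalC a b (conjV a) (conjV W) - (f:ℂ) * IC a b (conjV a) (conjV W))
         + (T.evalC a b (conjV Z) (conjV b) - (f:ℂ) * IC a b (conjV Z) (conjV b)))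
      + c * (starRingEnd ℂ c)^2 *
          ((T.evalC a W (conjV a) (conjV b) - (f:ℂ) * IC a W (conjV a) (conjV b))
         + (T.evalC Z b (conjV a) (conjV b) - (f:ℂ) * IC Z b (conjV a) (conjV b)))
      + c^2 * (starRingEnd ℂ c)^2 *
          (T.evalC a b (conjV a) (conjV b) - (f:ℂ) * IC a b (conjV a) (conjV b)) := by
  rw [AlgCurv.conjV_lin Z a c, AlgCurv.conjV_lin W b c]
  simp only [T.evalC_lin1, T.evalC_lin2, T.evalC_lin3, T.evalC_lin4, IC,
    cInner_lin1, cInner_lin2]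
  ring

end Variation


open scoped ComplexOrder

lemma quad_coeff_nonneg (c2 c4 : ℂ)
    (h : ∀ s : ℝ, ∃ ρ : ℝ, 0 ≤ ρ ∧
      ((4*s^2 : ℝ):ℂ) * c2 + ((4*s^4 : ℝ):ℂ) * c4 = (ρ:ℂ)) : 0 ≤ c2 := by
  have him : c2.im = 0 := by
    obtain ⟨ρ1, -, e1⟩ := h 1
    obtain ⟨ρ2, -, e2⟩ := h 2
    have i1 := congrArg Complex.im e1
    have i2 := congrArg Complex.im e2
    simp only [Complex.add_im, Complex.im_ofReal_mul, Complex.ofReal_im] at i1 i2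
    norm_num at i1 i2
    linarith
  have hre : 0 ≤ c2.re := by
    by_contra hneg
    push_neg at hneg
    set ε : ℝ := -c2.re / (2*(|c4.re|+1)) with hεdef
    have habs : (0:ℝ) ≤ |c4.re| := abs_nonneg _
    have hε : 0 < ε := div_pos (by linarith) (by positivity)
    have hdef : ε * (2*(|c4.re|+1)) = -c2.re := by
      rw [hεdef]; field_simp
    obtain ⟨ρ, hρ, e⟩ := h (Real.sqrt ε)
    have hsq : Real.sqrt ε ^ 2 = ε := Real.sq_sqrt hε.le
    have hre' := congrArg Complex.re e
    simp only [Complex.add_re, Complex.im_ofReal_mul, Complex.re_ofReal_mul,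
      Complex.ofReal_re] at hre'
    have h4 : Real.sqrt ε ^ 4 = ε^2 := by
      rw [show (4:ℕ) = 2*2 from rfl, pow_mul, hsq]
    rw [hsq, h4] at hre'
    have hc4 : c4.re ≤ |c4.re| := le_abs_self _
    nlinarith [sq_nonneg ε, mul_pos hε hε, hρ]
  rw [Complex.le_def]
  constructor
  · simpa using hre
  · simp [him]

section Variation2
variable {n : ℕ} (T : AlgCurv n) (f : ℝ) (Z W : Fin n → ℂ)

lemma second_variation
    (hT : ∀ Z W : Fin n → ℂ, ∃ r : ℝ, 0 ≤ r ∧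
      T.evalC Z W (conjV Z) (conjV W) - (f : ℂ) * IC Z W (conjV Z) (conjV W) = (r : ℂ))
    (h0 : T.evalC Z W (conjV Z) (conjV W) - (f : ℂ) * IC Z W (conjV Z) (conjV W) = 0)
    (a b : Fin n → ℂ) :
    0 ≤ (T.evalC a W (conjV a) (conjV W) - (f:ℂ) * IC a W (conjV a) (conjV W))
      + (T.evalC a W (conjV Z) (conjV b) - (f:ℂ) * IC a W (conjV Z) (conjV b))
      + (T.evalC Z b (conjV a) (conjV W) - (f:ℂ) * IC Z b (conjV a) (conjV W))
      + (T.evalC Z b (conjV Z) (conjV b) - (f:ℂ) * IC Z b (conjV Z) (conjV b)) := by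
  apply quad_coeff_nonneg _
    (T.evalC a b (conjV a) (conjV b) - (f:ℂ) * IC a b (conjV a) (conjV b))
  intro s
  obtain ⟨r1, hr1, e1⟩ := hT (fun i => Z i + (s:ℂ) * a i) (fun i => W i + (s:ℂ) * b i)
  obtain ⟨r2, hr2, e2⟩ := hT (fun i => Z i + (-(s:ℂ)) * a i) (fun i => W i + (-(s:ℂ)) * b i)
  obtain ⟨r3, hr3, e3⟩ := hT (fun i => Z i + ((s:ℂ)*Complex.I) * a i)
    (fun i => W i + ((s:ℂ)*Complex.I) * b i)
  obtain ⟨r4, hr4, e4⟩ := hT (fun i => Z i + (-((s:ℂ)*Complex.I)) * a i)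
    (fun i => W i + (-((s:ℂ)*Complex.I)) * b i)
  refine ⟨r1+r2+r3+r4, by positivity, ?_⟩
  rw [Sv_expand T f Z W a b ((s:ℂ))] at e1
  rw [Sv_expand T f Z W a b (-(s:ℂ))] at e2
  rw [Sv_expand T f Z W a b ((s:ℂ)*Complex.I)] at e3
  rw [Sv_expand T f Z W a b (-((s:ℂ)*Complex.I))] at e4
  simp only [map_neg, map_mul, Complex.conj_ofReal, Complex.conj_I] at e1 e2 e3 e4
  push_cast
  linear_combination (norm := (ring_nf; simp only [Complex.I_sq, Complex.I_pow_four]; ring_nf))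
    e1 + e2 + e3 + e4 - 4*h0

end Variation2


section I4
variable {n : ℕ} (Z W a b : Fin n → ℂ)

lemma I4_sos :
    IC a W (conjV a) (conjV W) + IC a W (conjV Z) (conjV b)
      + IC Z b (conjV a) (conjV W) + IC Z b (conjV Z) (conjV b)
    = (1/2 : ℂ) * ∑ p : Fin n, ∑ q : Fin n,
        ((a p * W q - a q * W p + Z p * b q - Z q * b p) *
         (conjV a p * conjV W q - conjV a q * conjV W p
            + conjV Z p * conjV b q - conjV Z q * conjV b p)) := by
  have expand : ∀ p q : Fin n,
      ((a p * W q - a q * W p + Z p * b q - Z q * b p) *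
       (conjV a p * conjV W q - conjV a q * conjV W p
          + conjV Z p * conjV b q - conjV Z q * conjV b p))
      =
      (a p * (conjV a p)) * (W q * (conjV W q))
      - (a p * (conjV W p)) * (W q * (conjV a q))
      + (a p * (conjV Z p)) * (W q * (conjV b q))
      - (a p * (conjV b p)) * (W q * (conjV Z q))
      - (W p * (conjV a p)) * (a q * (conjV W q))
      + (W p * (conjV W p)) * (a q * (conjV a q))
      - (W p * (conjV Z p)) * (a q * (conjV b q))
      + (W p * (conjV b p)) * (a q * (conjV Z q))
      + (Z p * (conjV a p)) * (b q * (conjV W q))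
      - (Z p * (conjV W p)) * (b q * (conjV a q))
      + (Z p * (conjV Z p)) * (b q * (conjV b q))
      - (Z p * (conjV b p)) * (b q * (conjV Z q))
      - (b p * (conjV a p)) * (Z q * (conjV W q))
      + (b p * (conjV W p)) * (Z q * (conjV a q))
      - (b p * (conjV Z p)) * (Z q * (conjV b q))
      + (b p * (conjV b p)) * (Z q * (conjV Z q)) := by intros; ring
  simp only [expand, Finset.sum_add_distrib, Finset.sum_sub_distrib,
    ← Finset.mul_sum, ← Finset.sum_mul]
  simp only [IC, cInner]
  ring

lemma I4_nonneg :
    0 ≤ IC a W (conjV a) (conjV W) + IC a W (conjV Z) (conjV b)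
      + IC Z b (conjV a) (conjV W) + IC Z b (conjV Z) (conjV b) := by
  rw [I4_sos Z W a b]
  apply mul_nonneg (by
    rw [show (1/2:ℂ) = ((1/2:ℝ):ℂ) by norm_num]
    exact Complex.zero_le_real.mpr (by norm_num))
  apply Finset.sum_nonneg
  intro p _
  apply Finset.sum_nonneg
  intro q _
  have hbar : (conjV a p * conjV W q - conjV a q * conjV W p
      + conjV Z p * conjV b q - conjV Z q * conjV b p)
      = starRingEnd ℂ (a p * W q - a q * W p + Z p * b q - Z q * b p) := by
    simp only [conjV, map_add, map_sub, map_mul]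
  rw [hbar, Complex.mul_conj]
  exact Complex.zero_le_real.mpr (Complex.normSq_nonneg _)

end I4


section MatrixLayer
variable {n : ℕ} (T : AlgCurv n) (Z W : Fin n → ℂ)

def Kmat : Matrix (Fin n ⊕ Fin n) (Fin n ⊕ Fin n) ℂ :=
  Matrix.of fun i j =>
    match i, j with
    | Sum.inl i, Sum.inl j => T.evalC Z (basisC j) (conjV Z) (basisC i)
    | Sum.inl i, Sum.inr j => -T.evalC W (basisC j) (conjV Z) (basisC i)
    | Sum.inr i, Sum.inl j => -T.evalC (conjV W) (basisC i) Z (basisC j)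
    | Sum.inr i, Sum.inr j => T.evalC W (basisC j) (conjV W) (basisC i)

lemma evalC_star (X Y U V : Fin n → ℂ) :
    starRingEnd ℂ (T.evalC X Y U V)
      = T.evalC (conjV X) (conjV Y) (conjV U) (conjV V) :=
  (T.evalC_conj X Y U V).symm

lemma Kmat_isHermitian : (Kmat T Z W).IsHermitian := by
  apply Matrix.IsHermitian.ext
  intro i j
  rcases i with i | i <;> rcases j with j | j <;>
    simp only [Kmat, Matrix.of_apply, Complex.star_def, map_neg, evalC_star,
      AlgCurv.conjV_conjV, AlgCurv.conjV_basisC] <;>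
    first
      | rfl
      | exact T.evalC_pair _ _ _ _
      | exact neg_inj.mpr (T.evalC_pair _ _ _ _)

lemma Kmat_form (x : Fin n ⊕ Fin n → ℂ) :
    dotProduct (star x) (Matrix.mulVec (Kmat T Z W) x)
      = T.evalC (fun p => x (Sum.inr p)) W (conjV fun p => x (Sum.inr p)) (conjV W)
        + T.evalC (fun p => x (Sum.inr p)) W (conjV Z) (conjV fun p => x (Sum.inl p))
        + T.evalC Z (fun p => x (Sum.inl p)) (conjV fun p => x (Sum.inr p)) (conjV W)
        + T.evalC Z (fun p => x (Sum.inl p)) (conjV Z) (conjV fun p => x (Sum.inl p)) := by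
  have step : dotProduct (star x) (Matrix.mulVec (Kmat T Z W) x)
      = T.evalC Z (fun p => x (Sum.inl p)) (conjV Z) (conjV fun p => x (Sum.inl p))
        + -T.evalC (conjV W) (conjV fun p => x (Sum.inr p)) Z (fun p => x (Sum.inl p))
        + (-T.evalC W (fun p => x (Sum.inr p)) (conjV Z) (conjV fun p => x (Sum.inl p))
          + T.evalC W (fun p => x (Sum.inr p)) (conjV W) (conjV fun p => x (Sum.inr p))) := by
    simp only [dotProduct, Matrix.mulVec, Fintype.sum_sum_type, Pi.star_apply,
      Kmat, Matrix.of_apply, Complex.star_def, mul_add, Finset.mul_sum, ← mul_assoc,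
      mul_neg, neg_mul, Finset.sum_neg_distrib, Finset.sum_add_distrib]
    rw [T.evalC_basis_expand1 Z (conjV Z) (fun p => x (Sum.inl p)) (fun p => x (Sum.inl p)),
      T.evalC_basis_expand2 (conjV W) Z (fun p => x (Sum.inr p)) (fun p => x (Sum.inl p)),
      T.evalC_basis_expand1 W (conjV Z) (fun p => x (Sum.inl p)) (fun p => x (Sum.inr p)),
      T.evalC_basis_expand1 W (conjV W) (fun p => x (Sum.inr p)) (fun p => x (Sum.inr p))]
  rw [step]
  have s2 : -T.evalC W (fun p => x (Sum.inr p)) (conjV Z) (conjV fun p => x (Sum.inl p))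
      = T.evalC (fun p => x (Sum.inr p)) W (conjV Z) (conjV fun p => x (Sum.inl p)) :=
    (T.evalC_skew1 W (fun p => x (Sum.inr p)) _ _).symm
  have s3 : -T.evalC (conjV W) (conjV fun p => x (Sum.inr p)) Z (fun p => x (Sum.inl p))
      = T.evalC Z (fun p => x (Sum.inl p)) (conjV fun p => x (Sum.inr p)) (conjV W) := by
    rw [(T.evalC_skew1 (conjV W) (conjV fun p => x (Sum.inr p)) Z (fun p => x (Sum.inl p))).symm,
      T.evalC_pair]
  have s4 : T.evalC W (fun p => x (Sum.inr p)) (conjV W) (conjV fun p => x (Sum.inr p))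
      = T.evalC (fun p => x (Sum.inr p)) W (conjV fun p => x (Sum.inr p)) (conjV W) := by
    rw [T.evalC_skew1 (fun p => x (Sum.inr p)) W (conjV W) (conjV fun p => x (Sum.inr p)),
      T.evalC_skew2 (fun p => x (Sum.inr p)) W (conjV fun p => x (Sum.inr p)) (conjV W),
      neg_neg]
  rw [s2, s3, s4]
  ring

end MatrixLayer


section Final
variable {n : ℕ} (T : AlgCurv n) (f : ℝ) (Z W : Fin n → ℂ)

lemma Kmat_posSemidef (hf : 0 ≤ f)
    (hT : ∀ Z W : Fin n → ℂ, ∃ r : ℝ, 0 ≤ r ∧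
      T.evalC Z W (conjV Z) (conjV W) - (f : ℂ) * IC Z W (conjV Z) (conjV W) = (r : ℂ))
    (h0 : T.evalC Z W (conjV Z) (conjV W) - (f : ℂ) * IC Z W (conjV Z) (conjV W) = 0) :
    (Kmat T Z W).PosSemidef := by
  refine Matrix.posSemidef_iff_dotProduct_mulVec.mpr ⟨Kmat_isHermitian T Z W, fun x => ?_⟩
  have hform := Kmat_form T Z W x
  have hvar := second_variation T f Z W hT h0 (fun p => x (Sum.inr p)) (fun p => x (Sum.inl p))
  have hI := I4_nonneg Z W (fun p => x (Sum.inr p)) (fun p => x (Sum.inl p))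
  have hfC : 0 ≤ (f:ℂ) := Complex.zero_le_real.mpr hf
  have htot := add_nonneg hvar (mul_nonneg hfC hI)
  have hkey : dotProduct (star x) (Matrix.mulVec (Kmat T Z W) x)
      = ((T.evalC (fun p => x (Sum.inr p)) W (conjV fun p => x (Sum.inr p)) (conjV W)
            - (f:ℂ) * IC (fun p => x (Sum.inr p)) W (conjV fun p => x (Sum.inr p)) (conjV W))
        + (T.evalC (fun p => x (Sum.inr p)) W (conjV Z) (conjV fun p => x (Sum.inl p))
            - (f:ℂ) * IC (fun p => x (Sum.inr p)) W (conjV Z) (conjV fun p => x (Sum.inl p)))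
        + (T.evalC Z (fun p => x (Sum.inl p)) (conjV fun p => x (Sum.inr p)) (conjV W)
            - (f:ℂ) * IC Z (fun p => x (Sum.inl p)) (conjV fun p => x (Sum.inr p)) (conjV W))
        + (T.evalC Z (fun p => x (Sum.inl p)) (conjV Z) (conjV fun p => x (Sum.inl p))
            - (f:ℂ) * IC Z (fun p => x (Sum.inl p)) (conjV Z) (conjV fun p => x (Sum.inl p))))
      + (f:ℂ) * (IC (fun p => x (Sum.inr p)) W (conjV fun p => x (Sum.inr p)) (conjV W)
          + IC (fun p => x (Sum.inr p)) W (conjV Z) (conjV fun p => x (Sum.inl p))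
          + IC Z (fun p => x (Sum.inl p)) (conjV fun p => x (Sum.inr p)) (conjV W)
          + IC Z (fun p => x (Sum.inl p)) (conjV Z) (conjV fun p => x (Sum.inl p))) := by
    rw [hform]; ring
  rw [hkey]
  exact htot

end Final


lemma sum4_comm' {α β γ δ : Type*} [Fintype α] [Fintype β] [Fintype γ] [Fintype δ]
    (f : α → β → γ → δ → ℂ) :
    ∑ i : α, ∑ j : β, ∑ k : γ, ∑ l : δ, f i j k l
      = ∑ k : γ, ∑ l : δ, ∑ i : α, ∑ j : β, f i j k l := by
  calc ∑ i : α, ∑ j : β, ∑ k : γ, ∑ l : δ, f i j k l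
      = ∑ i : α, ∑ k : γ, ∑ j : β, ∑ l : δ, f i j k l :=
        Finset.sum_congr rfl fun i _ => Finset.sum_comm
    _ = ∑ k : γ, ∑ i : α, ∑ j : β, ∑ l : δ, f i j k l := Finset.sum_comm
    _ = ∑ k : γ, ∑ i : α, ∑ l : δ, ∑ j : β, f i j k l :=
        Finset.sum_congr rfl fun k _ => Finset.sum_congr rfl fun i _ => Finset.sum_comm
    _ = ∑ k : γ, ∑ l : δ, ∑ i : α, ∑ j : β, f i j k l :=
        Finset.sum_congr rfl fun k _ => Finset.sum_comm

lemma gram_swap {n : ℕ} (g1 g2 g3 g4 : (Fin n ⊕ Fin n) → Fin n → ℂ) :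
    ∑ p : Fin n, ∑ q : Fin n,
      (∑ k : Fin n ⊕ Fin n, g1 k q * g2 k p) * (∑ l : Fin n ⊕ Fin n, g3 l q * g4 l p)
    = ∑ k : Fin n ⊕ Fin n, ∑ l : Fin n ⊕ Fin n,
      (∑ p : Fin n, g2 k p * g4 l p) * (∑ q : Fin n, g1 k q * g3 l q) := by
  simp only [Finset.sum_mul_sum]
  rw [sum4_comm']
  exact Finset.sum_congr rfl fun k _ => Finset.sum_congr rfl fun l _ =>
    Finset.sum_congr rfl fun p _ => Finset.sum_congr rfl fun q _ => by ring

open scoped MatrixOrder in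
lemma posSemidef_eq_conjTranspose_mul_self {m : Type} [Fintype m] [DecidableEq m]
    {A : Matrix m m ℂ} (h : A.PosSemidef) :
    ∃ B : Matrix m m ℂ, A = B.conjTranspose * B := by
  have h0 : 0 ≤ A := Matrix.nonneg_iff_posSemidef.mpr h
  refine ⟨CFC.sqrt A, ?_⟩
  have hs : IsSelfAdjoint (CFC.sqrt A) := IsSelfAdjoint.of_nonneg (CFC.sqrt_nonneg A)
  rw [← Matrix.star_eq_conjTranspose, hs.star_eq, CFC.sqrt_mul_sqrt_self A h0]

theorem null_vector_Q_modified'' {n : ℕ} (T : AlgCurv n) (f : ℝ) (hf : 0 ≤ f)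
    (hT : ∀ Z W : Fin n → ℂ, ∃ r : ℝ, 0 ≤ r ∧
      T.evalC Z W (conjV Z) (conjV W) - (f : ℂ) * IC Z W (conjV Z) (conjV W) = (r : ℂ))
    (Z W : Fin n → ℂ)
    (h0 : T.evalC Z W (conjV Z) (conjV W) - (f : ℂ) * IC Z W (conjV Z) (conjV W) = 0) :
    ∃ r : ℝ, 0 ≤ r ∧
      ((∑ p : Fin n, ∑ q : Fin n,
        T.evalC Z W (basisC p) (basisC q) * T.evalC (conjV Z) (conjV W) (basisC p) (basisC q))
      + 2 * (∑ p : Fin n, ∑ q : Fin n,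
        T.evalC Z (basisC p) (conjV Z) (basisC q) * T.evalC W (basisC p) (conjV W) (basisC q))
      - 2 * (∑ p : Fin n, ∑ q : Fin n,
        T.evalC Z (basisC p) (conjV W) (basisC q) * T.evalC W (basisC p) (conjV Z) (basisC q)))
      = (r : ℂ) := by
  obtain ⟨B, hB⟩ := posSemidef_eq_conjTranspose_mul_self
    (Kmat_posSemidef T f Z W hf hT h0)
  have hK : ∀ i j, Kmat T Z W i j
      = ∑ k : Fin n ⊕ Fin n, starRingEnd ℂ (B k i) * B k j := by
    intro i j
    rw [hB]
    simp [Matrix.mul_apply, Matrix.conjTranspose_apply, Complex.star_def]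
  set σ : (Fin n ⊕ Fin n) → (Fin n ⊕ Fin n) → ℂ :=
    fun k l => ∑ p : Fin n, B k (Sum.inl p) * B l (Sum.inr p) with hσ
  have hσconj : ∀ k l, starRingEnd ℂ (σ k l)
      = ∑ p : Fin n, starRingEnd ℂ (B k (Sum.inl p)) * starRingEnd ℂ (B l (Sum.inr p)) := by
    intro k l; simp [hσ, map_sum]
  -- entry identifications
  have ell : ∀ p q : Fin n, T.evalC Z (basisC p) (conjV Z) (basisC q)
      = Kmat T Z W (Sum.inl q) (Sum.inl p) := fun p q => rfl
  have err : ∀ p q : Fin n, T.evalC W (basisC p) (conjV W) (basisC q)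
      = Kmat T Z W (Sum.inr q) (Sum.inr p) := fun p q => rfl
  have elr : ∀ p q : Fin n, T.evalC W (basisC p) (conjV Z) (basisC q)
      = -Kmat T Z W (Sum.inl q) (Sum.inr p) := by
    intro p q; simp [Kmat]
  have erl : ∀ p q : Fin n, T.evalC Z (basisC p) (conjV W) (basisC q)
      = -Kmat T Z W (Sum.inr q) (Sum.inl p) := by
    intro p q
    have h1 : Kmat T Z W (Sum.inr q) (Sum.inl p)
        = -T.evalC (conjV W) (basisC q) Z (basisC p) := rfl
    rw [h1, neg_neg, ← T.evalC_pair Z (basisC p) (conjV W) (basisC q)]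
  have hX2 : (∑ p : Fin n, ∑ q : Fin n,
      T.evalC Z (basisC p) (conjV Z) (basisC q) * T.evalC W (basisC p) (conjV W) (basisC q))
      = ∑ k : Fin n ⊕ Fin n, ∑ l : Fin n ⊕ Fin n, σ k l * starRingEnd ℂ (σ k l) := by
    calc (∑ p : Fin n, ∑ q : Fin n,
        T.evalC Z (basisC p) (conjV Z) (basisC q) * T.evalC W (basisC p) (conjV W) (basisC q))
        = ∑ p : Fin n, ∑ q : Fin n,
          (∑ k : Fin n ⊕ Fin n, starRingEnd ℂ (B k (Sum.inl q)) * B k (Sum.inl p))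
            * (∑ l : Fin n ⊕ Fin n, starRingEnd ℂ (B l (Sum.inr q)) * B l (Sum.inr p)) := by
          simp only [ell, err, hK]
      _ = ∑ k : Fin n ⊕ Fin n, ∑ l : Fin n ⊕ Fin n,
          (∑ p : Fin n, B k (Sum.inl p) * B l (Sum.inr p))
            * (∑ q : Fin n, starRingEnd ℂ (B k (Sum.inl q)) * starRingEnd ℂ (B l (Sum.inr q))) :=
          gram_swap _ _ _ _
      _ = ∑ k : Fin n ⊕ Fin n, ∑ l : Fin n ⊕ Fin n, σ k l * starRingEnd ℂ (σ k l) := by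
          refine Finset.sum_congr rfl fun k _ => Finset.sum_congr rfl fun l _ => ?_
          rw [hσconj]
  have hX3 : (∑ p : Fin n, ∑ q : Fin n,
      T.evalC Z (basisC p) (conjV W) (basisC q) * T.evalC W (basisC p) (conjV Z) (basisC q))
      = ∑ k : Fin n ⊕ Fin n, ∑ l : Fin n ⊕ Fin n, σ k l * starRingEnd ℂ (σ l k) := by
    calc (∑ p : Fin n, ∑ q : Fin n,
        T.evalC Z (basisC p) (conjV W) (basisC q) * T.evalC W (basisC p) (conjV Z) (basisC q))
        = ∑ p : Fin n, ∑ q : Fin n,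
          (∑ k : Fin n ⊕ Fin n, starRingEnd ℂ (B k (Sum.inr q)) * B k (Sum.inl p))
            * (∑ l : Fin n ⊕ Fin n, starRingEnd ℂ (B l (Sum.inl q)) * B l (Sum.inr p)) := by
          refine Finset.sum_congr rfl fun p _ => Finset.sum_congr rfl fun q _ => ?_
          rw [erl, elr, hK, hK]
          rw [neg_mul_neg]
      _ = ∑ k : Fin n ⊕ Fin n, ∑ l : Fin n ⊕ Fin n,
          (∑ p : Fin n, B k (Sum.inl p) * B l (Sum.inr p))
            * (∑ q : Fin n, starRingEnd ℂ (B k (Sum.inr q)) * starRingEnd ℂ (B l (Sum.inl q))) :=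
          gram_swap _ _ _ _
      _ = ∑ k : Fin n ⊕ Fin n, ∑ l : Fin n ⊕ Fin n, σ k l * starRingEnd ℂ (σ l k) := by
          refine Finset.sum_congr rfl fun k _ => Finset.sum_congr rfl fun l _ => ?_
          rw [hσconj]
          congr 1
          exact Finset.sum_congr rfl fun q _ => by ring
  have hpart1 : (∑ p : Fin n, ∑ q : Fin n,
      T.evalC Z W (basisC p) (basisC q) * T.evalC (conjV Z) (conjV W) (basisC p) (basisC q))
      = ((∑ p : Fin n, ∑ q : Fin n,
          Complex.normSq (T.evalC Z W (basisC p) (basisC q)) : ℝ) : ℂ) := by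
    push_cast
    refine Finset.sum_congr rfl fun p _ => Finset.sum_congr rfl fun q _ => ?_
    have hc : T.evalC (conjV Z) (conjV W) (basisC p) (basisC q)
        = starRingEnd ℂ (T.evalC Z W (basisC p) (basisC q)) := by
      rw [evalC_star T Z W (basisC p) (basisC q), AlgCurv.conjV_basisC, AlgCurv.conjV_basisC]
    rw [hc, Complex.mul_conj]
  have hdiff : 2 * (∑ k : Fin n ⊕ Fin n, ∑ l : Fin n ⊕ Fin n, σ k l * starRingEnd ℂ (σ k l))
      - 2 * (∑ k : Fin n ⊕ Fin n, ∑ l : Fin n ⊕ Fin n, σ k l * starRingEnd ℂ (σ l k))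
      = ((∑ k : Fin n ⊕ Fin n, ∑ l : Fin n ⊕ Fin n,
          Complex.normSq (σ k l - σ l k) : ℝ) : ℂ) := by
    have expand : ∀ k l : Fin n ⊕ Fin n,
        (σ k l - σ l k) * (starRingEnd ℂ (σ k l) - starRingEnd ℂ (σ l k))
        = σ k l * starRingEnd ℂ (σ k l) - σ k l * starRingEnd ℂ (σ l k)
          - σ l k * starRingEnd ℂ (σ k l) + σ l k * starRingEnd ℂ (σ l k) := by
      intros; ring
    have swap1 : (∑ k : Fin n ⊕ Fin n, ∑ l : Fin n ⊕ Fin n, σ l k * starRingEnd ℂ (σ l k))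
        = ∑ k : Fin n ⊕ Fin n, ∑ l : Fin n ⊕ Fin n, σ k l * starRingEnd ℂ (σ k l) :=
      Finset.sum_comm
    have swap2 : (∑ k : Fin n ⊕ Fin n, ∑ l : Fin n ⊕ Fin n, σ l k * starRingEnd ℂ (σ k l))
        = ∑ k : Fin n ⊕ Fin n, ∑ l : Fin n ⊕ Fin n, σ k l * starRingEnd ℂ (σ l k) :=
      Finset.sum_comm
    have main : (∑ k : Fin n ⊕ Fin n, ∑ l : Fin n ⊕ Fin n,
        (σ k l - σ l k) * (starRingEnd ℂ (σ k l) - starRingEnd ℂ (σ l k)))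
        = 2 * (∑ k : Fin n ⊕ Fin n, ∑ l : Fin n ⊕ Fin n, σ k l * starRingEnd ℂ (σ k l))
          - 2 * (∑ k : Fin n ⊕ Fin n, ∑ l : Fin n ⊕ Fin n, σ k l * starRingEnd ℂ (σ l k)) := by
      simp only [expand, Finset.sum_add_distrib, Finset.sum_sub_distrib]
      rw [swap1, swap2]
      ring
    rw [← main]
    push_cast
    refine Finset.sum_congr rfl fun k _ => Finset.sum_congr rfl fun l _ => ?_
    rw [← Complex.mul_conj]
    rw [map_sub]
  refine ⟨(∑ p : Fin n, ∑ q : Fin n, Complex.normSq (T.evalC Z W (basisC p) (basisC q)))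
    + (∑ k : Fin n ⊕ Fin n, ∑ l : Fin n ⊕ Fin n, Complex.normSq (σ k l - σ l k)), ?_, ?_⟩
  · have h1 : 0 ≤ ∑ p : Fin n, ∑ q : Fin n, Complex.normSq (T.evalC Z W (basisC p) (basisC q)) :=
      Finset.sum_nonneg fun p _ => Finset.sum_nonneg fun q _ => Complex.normSq_nonneg _
    have h2 : 0 ≤ ∑ k : Fin n ⊕ Fin n, ∑ l : Fin n ⊕ Fin n, Complex.normSq (σ k l - σ l k) :=
      Finset.sum_nonneg fun k _ => Finset.sum_nonneg fun l _ => Complex.normSq_nonneg _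
    linarith
  · rw [hpart1, hX2, hX3]
    push_cast at hdiff ⊢
    linear_combination hdiff



/-- null-vector condition for the scalar-modified tensor
`R̃ = R − f I`. -/
theorem null_vector_Q_modified {n : ℕ} (T : AlgCurv n) (f : ℝ) (hf : 0 ≤ f)
    (hT : ∀ Z W : Fin n → ℂ, ∃ r : ℝ, 0 ≤ r ∧
      T.evalC Z W (conjV Z) (conjV W) - (f : ℂ) * IC Z W (conjV Z) (conjV W) = (r : ℂ))
    (Z W : Fin n → ℂ)
    (h0 : T.evalC Z W (conjV Z) (conjV W) - (f : ℂ) * IC Z W (conjV Z) (conjV W) = 0) :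
    ∃ r : ℝ, 0 ≤ r ∧ Qr T Z W (conjV Z) (conjV W) = (r : ℂ) := by
  obtain ⟨r, hr, he⟩ := null_vector_Q_modified'' T f hf hT Z W h0
  exact ⟨r, hr, by simpa only [Qr] using he⟩
end
end

section
/- Let R be an algebraic curvature tensor on ℝⁿ and let R̂ be the algebraic curvature tensor on ℝ^{n+2} defined by R̂(x,y,z,w) = R(π(x),π(y),π(z),π(w)), where π : ℝ^{n+2} → ℝⁿ is the projection onto the first n coordinates. Then the following are equivalent: (1) R̂ has nonnegative isotropic curvature, i.e. R̂(Ẑ, Ŵ, conj(Ẑ), conj(Ŵ)) ≥ 0 for all Ẑ, Ŵ ∈ ℂ^{n+2} with ⟨Ẑ,Ẑ⟩ = ⟨Ŵ,Ŵ⟩ = ⟨Ẑ,Ŵ⟩ = 0; (2) R has nonnegative complex sectional curvature, i.e. R(Z, W, Z̄, W̄) ≥ 0 for all Z, W ∈ ℂⁿ. -/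
open Complex

noncomputable section

/-- The complexified projection `ℂ^{n+2} → ℂⁿ` onto the first `n` coordinates. -/
def projC2 {n : ℕ} (Z : Fin (n + 2) → ℂ) : Fin n → ℂ := fun i => Z (Fin.castAdd 2 i)

lemma projC2_conjV {n : ℕ} (Z : Fin (n + 2) → ℂ) :
    projC2 (conjV Z) = conjV (projC2 Z) := rfl

lemma uvpq_exists (a b c : ℂ) :
    ∃ u v p q : ℂ, u * v = a ∧ p * q = b ∧ u * q + v * p = 2 * c := by
  by_cases ha : a = 0
  · exact ⟨0, 2 * c, 1, b, by simp [ha], by ring, by ring⟩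
  · obtain ⟨d, hd⟩ := IsAlgClosed.exists_pow_nat_eq (c ^ 2 - a * b) (n := 2) (by norm_num)
    refine ⟨1, a, (c + d) / a, c - d, by ring, ?_, ?_⟩
    · field_simp
      linear_combination -hd
    · field_simp
      ring

lemma extend_exists (a b c : ℂ) :
    ∃ z1 z2 w1 w2 : ℂ, z1 * z1 + z2 * z2 = a ∧ w1 * w1 + w2 * w2 = b ∧
      z1 * w1 + z2 * w2 = c := by
  obtain ⟨u, v, p, q, h1, h2, h3⟩ := uvpq_exists a b c
  refine ⟨(u + v) / 2, (u - v) / (2 * I), (p + q) / 2, (p - q) / (2 * I), ?_, ?_, ?_⟩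
  · rw [← h1]; field_simp [Complex.I_ne_zero]; ring_nf; rw [Complex.I_sq]; ring
  · rw [← h2]; field_simp [Complex.I_ne_zero]; ring_nf; rw [Complex.I_sq]; ring
  · field_simp [Complex.I_ne_zero]
    ring_nf
    rw [Complex.I_sq]
    linear_combination (-2 : ℂ) * h3

lemma projC2_append {n : ℕ} (Z : Fin n → ℂ) (v : Fin 2 → ℂ) :
    projC2 (Fin.append Z v) = Z := by
  funext i
  simp [projC2, Fin.append_left]

lemma cInner_append {n : ℕ} (Z W : Fin n → ℂ) (v w : Fin 2 → ℂ) :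
    cInner (Fin.append Z v) (Fin.append W w) =
      cInner Z W + (v 0 * w 0 + v 1 * w 1) := by
  simp [cInner, Fin.sum_univ_add, Fin.append_left, Fin.append_right, Fin.sum_univ_two]

/-- `R̂` (the pullback of `R` to `ℝ^{n+2}`) has nonnegative isotropic
curvature iff `R` has nonnegative complex sectional curvature. -/
theorem hatC_iff_nonnegCSC {n : ℕ} (T : AlgCurv n) :
    (∀ Zh Wh : Fin (n + 2) → ℂ,
        cInner Zh Zh = 0 → cInner Wh Wh = 0 → cInner Zh Wh = 0 →
        ∃ r : ℝ, 0 ≤ r ∧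
          T.evalC (projC2 Zh) (projC2 Wh) (projC2 (conjV Zh)) (projC2 (conjV Wh)) = (r : ℂ))
    ↔ nonnegCSC T := by
  constructor
  · intro h Z W
    obtain ⟨z1, z2, w1, w2, h1, h2, h3⟩ :=
      extend_exists (-(cInner Z Z)) (-(cInner W W)) (-(cInner Z W))
    have key := h (Fin.append Z ![z1, z2]) (Fin.append W ![w1, w2])
      (by rw [cInner_append]; simp [h1]) (by rw [cInner_append]; simp [h2])
      (by rw [cInner_append]; simp [h3])
    rwa [projC2_conjV, projC2_conjV, projC2_append, projC2_append] at key
  · intro h Zh Wh _ _ _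
    rw [projC2_conjV, projC2_conjV]
    exact h (projC2 Zh) (projC2 Wh)
end
end

section
/- For any Z, W ∈ ℂⁿ there exist complex numbers u, v, x, y such that the extended vectors Z̃ = (Z, u, v) and W̃ = (W, x, y) in ℂ^{n+2} satisfy ⟨Z̃, Z̃⟩ = 0, ⟨W̃, W̃⟩ = 0, and ⟨Z̃, W̃⟩ = 0; equivalently, u² + v² = −⟨Z,Z⟩, x² + y² = −⟨W,W⟩, and ux + vy = −⟨Z,W⟩. In particular, any two linearly independent vectors of ℂⁿ extend to vectors spanning a totally isotropic 2-plane in ℂ^{n+2}. -/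
open Complex

noncomputable section

lemma cInner_append_aux {n : ℕ} (Z W : Fin n → ℂ) (u v x y : ℂ) :
    cInner (Fin.append Z ![u, v]) (Fin.append W ![x, y]) = cInner Z W + (u * x + v * y) := by
  simp [cInner, Fin.sum_univ_add, Fin.append_left, Fin.append_right, Fin.sum_univ_two]

lemma key_isotropic (a b c : ℂ) :
    ∃ u v x y : ℂ, u * u + v * v = -a ∧ x * x + y * y = -b ∧ u * x + v * y = -c := by
  by_cases ha : a = 0
  · by_cases hc : c = 0
    · refine ⟨0, 0, 1 + (-b/4), I * (1 - (-b/4)), by simp [ha], ?_, by simp [hc]⟩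
      linear_combination ((1 - (-b/4)) * (1 - (-b/4))) * Complex.I_mul_I
    · have hd : (b/c) * c = b := div_mul_cancel₀ b hc
      refine ⟨1, I, (b/c - c)/2, I * (c + b/c)/2, ?_, ?_, ?_⟩
      · linear_combination Complex.I_mul_I + ha
      · linear_combination ((c + b/c)*(c + b/c)/4) * Complex.I_mul_I - hd
      · linear_combination ((c + b/c)/2) * Complex.I_mul_I
  · obtain ⟨t, ht⟩ := IsAlgClosed.exists_pow_nat_eq (c^2 - a*b) two_pos
    obtain ⟨γ, hγa⟩ : ∃ γ : ℂ, γ * a = c + t := ⟨(c+t)/a, div_mul_cancel₀ _ ha⟩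
    have h2 : a * (a * γ^2 - 2*c*γ + b) = 0 := by
      linear_combination (γ*a + t - c) * hγa + ht
    have h1 : a * γ^2 - 2*c*γ + b = 0 := (mul_eq_zero.mp h2).resolve_left ha
    refine ⟨1 + (-a/4), I * (1 - (-a/4)),
      γ + (-c/2 + a*γ/4), I * (γ - (-c/2 + a*γ/4)), ?_, ?_, ?_⟩
    · linear_combination ((1 - (-a/4)) * (1 - (-a/4))) * Complex.I_mul_I
    · linear_combination ((γ - (-c/2 + a*γ/4)) * (γ - (-c/2 + a*γ/4))) * Complex.I_mul_I + h1
    · linear_combination ((1 - (-a/4)) * (γ - (-c/2 + a*γ/4))) * Complex.I_mul_I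

/-- any `Z, W ∈ ℂⁿ` extend to vectors `Z̃ = (Z, u, v)`,
`W̃ = (W, x, y)` in `ℂ^{n+2}` spanning a totally isotropic plane. -/
theorem exists_isotropic_extension {n : ℕ} (Z W : Fin n → ℂ) :
    ∃ u v x y : ℂ,
      cInner (Fin.append Z ![u, v]) (Fin.append Z ![u, v]) = 0 ∧
      cInner (Fin.append W ![x, y]) (Fin.append W ![x, y]) = 0 ∧
      cInner (Fin.append Z ![u, v]) (Fin.append W ![x, y]) = 0 := by
  obtain ⟨u, v, x, y, h1, h2, h3⟩ := key_isotropic (cInner Z Z) (cInner W W) (cInner Z W)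
  refine ⟨u, v, x, y, ?_, ?_, ?_⟩ <;> rw [cInner_append_aux] <;>
    [linear_combination h1; linear_combination h2; linear_combination h3]
end
end

section
/- Let R be an algebraic curvature tensor on ℝⁿ and let R̃ be the algebraic curvature tensor on ℝ^{n+1} defined by R̃(x,y,z,w) = R(π(x),π(y),π(z),π(w)), where π : ℝ^{n+1} → ℝⁿ is the projection onto the first n coordinates. Then the following are equivalent: (1) R̃ has nonnegative isotropic curvature, i.e. R̃(Ẑ, Ŵ, conj(Ẑ), conj(Ŵ)) ≥ 0 for all Ẑ, Ŵ ∈ ℂ^{n+1} with ⟨Ẑ,Ẑ⟩ = ⟨Ŵ,Ŵ⟩ = ⟨Ẑ,Ŵ⟩ = 0; (2) R is nonnegative on isotropic 2-vectors, i.e. R(Z, W, Z̄, W̄) ≥ 0 for all Z, W ∈ ℂⁿ with ⟨Z,Z⟩·⟨W,W⟩ − ⟨Z,W⟩² = 0. -/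
open Complex

noncomputable section

/-- The complexified projection `ℂ^{n+1} → ℂⁿ` onto the first `n` coordinates. -/
def projC1 {n : ℕ} (Z : Fin (n + 1) → ℂ) : Fin n → ℂ := fun i => Z (Fin.castSucc i)

lemma cInner_snoc {n : ℕ} (Z W : Fin n → ℂ) (a b : ℂ) :
    cInner (Fin.snoc Z a) (Fin.snoc W b) = cInner Z W + a * b := by
  simp [cInner, Fin.sum_univ_castSucc]

lemma projC1_snoc {n : ℕ} (Z : Fin n → ℂ) (a : ℂ) : projC1 (Fin.snoc Z a) = Z := by
  funext i; simp [projC1]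

lemma projC1_conjV_snoc {n : ℕ} (Z : Fin n → ℂ) (a : ℂ) :
    projC1 (conjV (Fin.snoc Z a)) = conjV Z := by
  funext i; simp [projC1, conjV]

lemma cInner_proj {n : ℕ} (Zh Wh : Fin (n + 1) → ℂ) :
    cInner (projC1 Zh) (projC1 Wh)
      = cInner Zh Wh - Zh (Fin.last n) * Wh (Fin.last n) := by
  simp [cInner, projC1, Fin.sum_univ_castSucc]

/-- `R̃` (the pullback of `R` to `ℝ^{n+1}`) has nonnegative isotropic
curvature iff `R` is nonnegative on isotropic 2-vectors. -/
theorem tildeC_iff_nonneg_isotropic_two_vectors {n : ℕ} (T : AlgCurv n) :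
    (∀ Zh Wh : Fin (n + 1) → ℂ,
        cInner Zh Zh = 0 → cInner Wh Wh = 0 → cInner Zh Wh = 0 →
        ∃ r : ℝ, 0 ≤ r ∧
          T.evalC (projC1 Zh) (projC1 Wh) (projC1 (conjV Zh)) (projC1 (conjV Wh)) = (r : ℂ))
    ↔ (∀ Z W : Fin n → ℂ, cInner Z Z * cInner W W - (cInner Z W) ^ 2 = 0 →
        ∃ r : ℝ, 0 ≤ r ∧ T.evalC Z W (conjV Z) (conjV W) = (r : ℂ)) := by

  constructor
  · intro h Z W hiso
    obtain ⟨a, ha⟩ := IsAlgClosed.exists_pow_nat_eq (k := ℂ) (- cInner Z Z) two_pos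
    obtain ⟨b0, hb0⟩ := IsAlgClosed.exists_pow_nat_eq (k := ℂ) (- cInner W W) two_pos
    have hsq : (a * b0 - cInner Z W) * (a * b0 + cInner Z W) = 0 := by
      have : (a * b0) ^ 2 = (cInner Z W) ^ 2 := by
        have : (a * b0) ^ 2 = cInner Z Z * cInner W W := by
          rw [mul_pow, ha, hb0]; ring
        rw [this]; linear_combination hiso
      linear_combination this
    have hab : ∃ b : ℂ, b ^ 2 = - cInner W W ∧ a * b = - cInner Z W := by
      rcases mul_eq_zero.mp hsq with h1 | h1
      · exact ⟨-b0, by rw [neg_pow]; simp [hb0], by linear_combination -h1⟩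
      · exact ⟨b0, hb0, by linear_combination h1⟩
    obtain ⟨b, hb, habz⟩ := hab
    have := h (Fin.snoc Z a) (Fin.snoc W b)
      (by rw [cInner_snoc]; linear_combination (sq a).symm + ha)
      (by rw [cInner_snoc]; linear_combination (sq b).symm + hb)
      (by rw [cInner_snoc]; linear_combination habz)
    rwa [projC1_snoc, projC1_snoc, projC1_conjV_snoc, projC1_conjV_snoc] at this
  · intro h Zh Wh h1 h2 h3
    have hZ : cInner (projC1 Zh) (projC1 Zh) = - (Zh (Fin.last n)) ^ 2 := by
      rw [cInner_proj, h1]; ring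
    have hW : cInner (projC1 Wh) (projC1 Wh) = - (Wh (Fin.last n)) ^ 2 := by
      rw [cInner_proj, h2]; ring
    have hZW : cInner (projC1 Zh) (projC1 Wh) = - (Zh (Fin.last n) * Wh (Fin.last n)) := by
      rw [cInner_proj, h3]; ring
    have := h (projC1 Zh) (projC1 Wh) (by rw [hZ, hW, hZW]; ring)
    have heq : ∀ V : Fin (n+1) → ℂ, conjV (projC1 V) = projC1 (conjV V) := fun _ => rfl
    rwa [heq, heq] at this
end
end

section
/- Let R be an algebraic curvature tensor on ℝⁿ which is positive semidefinite as a quadratic form on 2-forms: for every skew-symmetric real n×n matrix ω, Σ_{i,j,k,l} R(eᵢ, eⱼ, e_k, e_l)·ω_{ij}·ω_{kl} ≥ 0, where {eᵢ} is the standard basis of ℝⁿ. Then R has nonnegative complex sectional curvature: R(Z, W, Z̄, W̄) ≥ 0 for all Z, W ∈ ℂⁿ. -/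
open Complex

noncomputable section

private lemma sum4_swap34' {n : ℕ} (f : Fin n → Fin n → Fin n → Fin n → ℂ) :
    (∑ i, ∑ j, ∑ k, ∑ l, f i j k l) = ∑ i, ∑ j, ∑ k, ∑ l, f i j l k :=
  Finset.sum_congr rfl fun _ _ => Finset.sum_congr rfl fun _ _ => Finset.sum_comm

private lemma sum4_swap12' {n : ℕ} (f : Fin n → Fin n → Fin n → Fin n → ℂ) :
    (∑ i, ∑ j, ∑ k, ∑ l, f i j k l) = ∑ i, ∑ j, ∑ k, ∑ l, f j i k l :=
  Finset.sum_comm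

private lemma sum4_swap_pairs' {n : ℕ} (f : Fin n → Fin n → Fin n → Fin n → ℂ) :
    (∑ i, ∑ j, ∑ k, ∑ l, f i j k l) = ∑ i, ∑ j, ∑ k, ∑ l, f k l i j := by
  rw [show (∑ i, ∑ j, ∑ k, ∑ l, f i j k l)
      = ∑ p : Fin n × Fin n, ∑ q : Fin n × Fin n, f p.1 p.2 q.1 q.2 by
    simp [Fintype.sum_prod_type]]
  rw [Finset.sum_comm]
  simp [Fintype.sum_prod_type]


/-- a curvature tensor which is positive semidefinite as a quadratic
form on 2-forms has nonnegative complex sectional curvature. -/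
theorem psd_operator_nonnegCSC {n : ℕ} (T : AlgCurv n)
    (hpsd : ∀ ω : Matrix (Fin n) (Fin n) ℝ, ω.transpose = -ω →
      0 ≤ ∑ i : Fin n, ∑ j : Fin n, ∑ k : Fin n, ∑ l : Fin n,
            T.R i j k l * ω i j * ω k l) :
    nonnegCSC T := by
  intro Z W
  set ω : Fin n → Fin n → ℂ := fun i j => Z i * W j - Z j * W i with hωdef
  set a : Fin n → Fin n → ℝ := fun i j => (ω i j).re with hadef
  set b : Fin n → Fin n → ℝ := fun i j => (ω i j).im with hbdef
  have hωskew : ∀ i j, ω j i = - ω i j := by intro i j; simp only [hωdef]; ring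
  have haskew : (Matrix.of a).transpose = -(Matrix.of a) := by
    ext i j
    simp [Matrix.transpose_apply, hadef, hωskew j i]
  have hbskew : (Matrix.of b).transpose = -(Matrix.of b) := by
    ext i j
    simp [Matrix.transpose_apply, hbdef, hωskew j i]
  have ha := hpsd (Matrix.of a) haskew
  have hb := hpsd (Matrix.of b) hbskew
  simp only [Matrix.of_apply] at ha hb
  set Sa : ℝ := ∑ i, ∑ j, ∑ k, ∑ l, T.R i j k l * a i j * a k l with hSa
  set Sb : ℝ := ∑ i, ∑ j, ∑ k, ∑ l, T.R i j k l * b i j * b k l with hSb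
  refine ⟨(1/4) * (Sa + Sb), by linarith, ?_⟩
  set E : ℂ := T.evalC Z W (conjV Z) (conjV W) with hE
  set S : ℂ := ∑ i, ∑ j, ∑ k, ∑ l,
      (T.R i j k l : ℂ) * ω i j * (starRingEnd ℂ) (ω k l) with hS
  -- Step A : S = 4 * E
  have hsk2 : ∀ i j k l, ((T.R i j l k : ℝ) : ℂ) = -(T.R i j k l : ℂ) := by
    intro i j k l; rw [T.skew₂ i j k l]; push_cast; ring
  have hsk1 : ∀ i j k l, ((T.R j i k l : ℝ) : ℂ) = -(T.R i j k l : ℂ) := by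
    intro i j k l; rw [T.skew₁ i j k l]; push_cast; ring
  have hE' : E = ∑ i, ∑ j, ∑ k, ∑ l,
      (T.R i j k l : ℂ) * Z i * W j * (starRingEnd ℂ) (Z k) * (starRingEnd ℂ) (W l) := rfl
  have h2 : (∑ i, ∑ j, ∑ k, ∑ l,
      (T.R i j k l : ℂ) * Z i * W j * (starRingEnd ℂ) (Z l) * (starRingEnd ℂ) (W k)) = -E := by
    rw [sum4_swap34' (fun i j k l => (T.R i j k l : ℂ) * Z i * W j *
        (starRingEnd ℂ) (Z l) * (starRingEnd ℂ) (W k)), hE']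
    simp only [← Finset.sum_neg_distrib]
    refine Finset.sum_congr rfl fun i _ => Finset.sum_congr rfl fun j _ =>
      Finset.sum_congr rfl fun k _ => Finset.sum_congr rfl fun l _ => ?_
    rw [hsk2 i j k l]; ring
  have h3 : (∑ i, ∑ j, ∑ k, ∑ l,
      (T.R i j k l : ℂ) * Z j * W i * (starRingEnd ℂ) (Z k) * (starRingEnd ℂ) (W l)) = -E := by
    rw [sum4_swap12' (fun i j k l => (T.R i j k l : ℂ) * Z j * W i *
        (starRingEnd ℂ) (Z k) * (starRingEnd ℂ) (W l)), hE']
    simp only [← Finset.sum_neg_distrib]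
    refine Finset.sum_congr rfl fun i _ => Finset.sum_congr rfl fun j _ =>
      Finset.sum_congr rfl fun k _ => Finset.sum_congr rfl fun l _ => ?_
    rw [hsk1 i j k l]; ring
  have h4 : (∑ i, ∑ j, ∑ k, ∑ l,
      (T.R i j k l : ℂ) * Z j * W i * (starRingEnd ℂ) (Z l) * (starRingEnd ℂ) (W k)) = E := by
    rw [sum4_swap12' (fun i j k l => (T.R i j k l : ℂ) * Z j * W i *
        (starRingEnd ℂ) (Z l) * (starRingEnd ℂ) (W k))]
    rw [sum4_swap34' (fun i j k l => (T.R j i k l : ℂ) * Z i * W j *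
        (starRingEnd ℂ) (Z l) * (starRingEnd ℂ) (W k)), hE']
    refine Finset.sum_congr rfl fun i _ => Finset.sum_congr rfl fun j _ =>
      Finset.sum_congr rfl fun k _ => Finset.sum_congr rfl fun l _ => ?_
    rw [hsk1 i j l k, hsk2 i j k l]; ring
  have hA : S = 4 * E := by
    have hterm : ∀ i j k l : Fin n, (T.R i j k l : ℂ) * ω i j * (starRingEnd ℂ) (ω k l)
        = (T.R i j k l : ℂ) * Z i * W j * (starRingEnd ℂ) (Z k) * (starRingEnd ℂ) (W l)
        - (T.R i j k l : ℂ) * Z i * W j * (starRingEnd ℂ) (Z l) * (starRingEnd ℂ) (W k)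
        - (T.R i j k l : ℂ) * Z j * W i * (starRingEnd ℂ) (Z k) * (starRingEnd ℂ) (W l)
        + (T.R i j k l : ℂ) * Z j * W i * (starRingEnd ℂ) (Z l) * (starRingEnd ℂ) (W k) := by
      intro i j k l
      simp only [hωdef, map_sub, map_mul]
      ring
    rw [hS]
    simp only [hterm, Finset.sum_add_distrib, Finset.sum_sub_distrib]
    rw [← hE', h2, h3, h4]
    ring
  -- Step B : S = Sa + Sb (as a complex number)
  have hconj : ∀ z : ℂ, (starRingEnd ℂ) z = (z.re : ℂ) - (z.im : ℂ) * I := by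
    intro z; simp [Complex.ext_iff]
  have hcross : (∑ i, ∑ j, ∑ k, ∑ l, (T.R i j k l : ℂ) * (b i j : ℂ) * (a k l : ℂ))
      = ∑ i, ∑ j, ∑ k, ∑ l, (T.R i j k l : ℂ) * (a i j : ℂ) * (b k l : ℂ) := by
    rw [sum4_swap_pairs' (fun i j k l => (T.R i j k l : ℂ) * (b i j : ℂ) * (a k l : ℂ))]
    refine Finset.sum_congr rfl fun i _ => Finset.sum_congr rfl fun j _ =>
      Finset.sum_congr rfl fun k _ => Finset.sum_congr rfl fun l _ => ?_
    rw [show T.R k l i j = T.R i j k l from (T.pair_symm i j k l).symm]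
    ring
  have hterm2 : ∀ i j k l : Fin n, (T.R i j k l : ℂ) * ω i j * (starRingEnd ℂ) (ω k l)
      = (T.R i j k l : ℂ) * (a i j : ℂ) * (a k l : ℂ)
      + (T.R i j k l : ℂ) * (b i j : ℂ) * (b k l : ℂ)
      + I * ((T.R i j k l : ℂ) * (b i j : ℂ) * (a k l : ℂ))
      - I * ((T.R i j k l : ℂ) * (a i j : ℂ) * (b k l : ℂ)) := by
    intro i j k l
    rw [hconj (ω k l), show ω i j = ((ω i j).re : ℂ) + ((ω i j).im : ℂ) * I from
      (Complex.re_add_im _).symm]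
    simp only [hadef, hbdef]
    linear_combination (-(T.R i j k l : ℂ) * ((ω i j).im : ℂ) * ((ω k l).im : ℂ)) * Complex.I_sq
  have hB : S = ((Sa + Sb : ℝ) : ℂ) := by
    rw [hS]
    simp only [hterm2, Finset.sum_add_distrib, Finset.sum_sub_distrib, ← Finset.mul_sum]
    rw [hcross]
    push_cast [hSa, hSb]
    ring
  have h5 : (4 : ℂ) * E = ((Sa + Sb : ℝ) : ℂ) := by rw [← hA, hB]
  push_cast at h5 ⊢
  linear_combination (1/4 : ℂ) * h5
end
end
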